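/- For every molecule node u of an AND-OR synthesis tree, the reaction number rn_V(u) equals the minimum, over all synthesis routes of u, of the route's total cost with respect to V (the minimum is attained since a molecule node has only finitely many synthesis routes, and at least one route exists because every internal molecule node has a nonempty list of reaction children). -/

import Mathlib

/-- AND-OR synthesis trees over a molecule type `M`: a molecule node is either a
frontier leaf carrying an element of `M`, or an internal node carrying a nonempty
list (encoded as head plus tail) of reaction children; a reaction node is a pair
of a real cost and a list of molecule children. -/
inductive Mol (M : Type) where
  | frontier : M → Mol M
  | node : (ℝ × List (Mol M)) → List (ℝ × List (Mol M)) → Mol M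

mutual
/-- Reaction number of a molecule node: `V m` at a frontier leaf, and the
minimum of the reaction numbers of the reaction children at an internal node. -/
noncomputable def rn {M : Type} (V : M → ℝ) : Mol M → ℝ
  | .frontier m => V m
  | .node r rs => (rs.attach.map fun ⟨R, _⟩ => rnR V R).foldr min (rnR V r)
termination_by u => sizeOf u
decreasing_by
  · simp; omega
  · have := List.sizeOf_lt_of_mem ‹R ∈ rs›; simp; omega

/-- Reaction number of a reaction node: its cost plus the sum of the reaction
numbers of its molecule children. -/
noncomputable def rnR {M : Type} (V : M → ℝ) : ℝ × List (Mol M) → ℝ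
  | (c, ms) => c + (ms.attach.map fun ⟨u, _⟩ => rn V u).sum
termination_by R => sizeOf R
decreasing_by
  · have := List.sizeOf_lt_of_mem ‹u ∈ ms›; simp; omega
end

/-- A synthesis route of a molecule node: the unique route of a frontier leaf is
the leaf itself; a route of an internal node selects one reaction child and a
route for each of that reaction's molecule children. -/
inductive Route {M : Type} : Mol M → Type
  | leaf (m : M) : Route (.frontier m)
  | step {r rs} (i : Fin (r :: rs : List (ℝ × List (Mol M))).length)
      (subs : ∀ j : Fin ((r :: rs).get i).2.length, Route (((r :: rs).get i).2.get j)) :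
      Route (.node r rs)

/-- Total cost of a route w.r.t. `V`: the sum of the costs of all selected
reaction nodes plus the sum of `V` over the molecules at the route's frontier
leaves. -/
noncomputable def routeCost {M : Type} (V : M → ℝ) : {u : Mol M} → Route u → ℝ
  | _, .leaf m => V m
  | _, .step (r := r) (rs := rs) i subs =>
      ((r :: rs).get i).1 + ∑ j, routeCost V (subs j)

lemma foldrMin_le {a : ℝ} {l : List ℝ} : l.foldr min a ≤ a := by
  induction l with
  | nil => simp
  | cons b l ih => exact le_trans (min_le_right _ _) ih

lemma foldrMin_le_mem {a x : ℝ} {l : List ℝ} (hx : x ∈ l) : l.foldr min a ≤ x := by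
  induction l with
  | nil => simp at hx
  | cons b l ih =>
    rcases List.mem_cons.mp hx with h | h
    · simp only [h, List.foldr_cons]
      exact min_le_left _ _
    · exact le_trans (min_le_right _ _) (ih h)

lemma foldrMin_mem {a : ℝ} {l : List ℝ} : l.foldr min a = a ∨ l.foldr min a ∈ l := by
  induction l with
  | nil => simp
  | cons b l ih =>
    simp only [List.foldr_cons]
    rcases le_total b (l.foldr min a) with h | h
    · right; simp [min_eq_left h]
    · rw [min_eq_right h]
      rcases ih with h' | h'
      · exact Or.inl h'
      · exact Or.inr (List.mem_cons_of_mem _ h')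

lemma sum_map_fin {α : Type*} (f : α → ℝ) (ms : List α) :
    (ms.map f).sum = ∑ j : Fin ms.length, f (ms.get j) := by
  induction ms with
  | nil => simp
  | cons a l ih =>
    rw [List.map_cons, List.sum_cons, ih]
    exact (Fin.sum_univ_succ (f := fun j : Fin (l.length + 1) => f ((a :: l).get j))).symm

lemma rn_node {M : Type} (V : M → ℝ) (r : ℝ × List (Mol M)) (rs : List (ℝ × List (Mol M))) :
    rn V (.node r rs) = (rs.map (rnR V)).foldr min (rnR V r) := by
  rw [rn]
  congr 1
  simp

lemma rnR_eq {M : Type} (V : M → ℝ) (R : ℝ × List (Mol M)) :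
    rnR V R = R.1 + ∑ j : Fin R.2.length, rn V (R.2.get j) := by
  obtain ⟨c, ms⟩ := R
  rw [rnR]
  have h1 : (ms.attach.map fun ⟨u, _⟩ => rn V u) = ms.map (rn V) := by simp
  rw [h1, sum_map_fin]

lemma sizeOf_child_lt {M : Type} {r : ℝ × List (Mol M)} {rs : List (ℝ × List (Mol M))}
    {R : ℝ × List (Mol M)} (hR : R ∈ r :: rs) {u' : Mol M} (hu' : u' ∈ R.2) :
    sizeOf u' < sizeOf (Mol.node r rs) := by
  have h1 := List.sizeOf_lt_of_mem hu'
  rcases List.mem_cons.mp hR with h | h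
  · subst h
    obtain ⟨c, ms⟩ := R
    simp at h1 ⊢
    omega
  · have h2 := List.sizeOf_lt_of_mem h
    obtain ⟨c, ms⟩ := R
    simp at h1 h2 ⊢
    omega

lemma rn_eq_min_routeCost_aux {M : Type} (V : M → ℝ) :
    ∀ (n : ℕ) (u : Mol M), sizeOf u ≤ n →
      IsLeast {x : ℝ | ∃ rt : Route u, routeCost V rt = x} (rn V u) := by
  intro n
  induction n with
  | zero =>
    intro u hu
    exfalso
    cases u <;> simp at hu
  | succ n ih =>
    intro u hu
    match u with
    | .frontier m =>
      constructor
      · exact ⟨.leaf m, by rw [routeCost, rn]⟩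
      · rintro x ⟨rt, rfl⟩
        cases rt
        rw [routeCost, rn]
    | .node r rs =>
      have ihc : ∀ R ∈ r :: rs, ∀ u' ∈ R.2,
          IsLeast {x : ℝ | ∃ rt : Route u', routeCost V rt = x} (rn V u') := by
        intro R hR u' hu'
        exact ih u' (by have := sizeOf_child_lt hR hu'; omega)
      constructor
      · have hR : ∃ R ∈ r :: rs, rn V (.node r rs) = rnR V R := by
          rw [rn_node]
          rcases foldrMin_mem (a := rnR V r) (l := rs.map (rnR V)) with h | h
          · exact ⟨r, List.mem_cons_self, h⟩
          · obtain ⟨R, hRmem, hReq⟩ := List.mem_map.mp h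
            exact ⟨R, List.mem_cons_of_mem _ hRmem, hReq.symm⟩
        obtain ⟨R, hRmem, hReq⟩ := hR
        obtain ⟨i, hi⟩ := List.mem_iff_get.mp hRmem
        have hch : ∀ j : Fin ((r :: rs).get i).2.length,
            ∃ rt : Route (((r :: rs).get i).2.get j),
              routeCost V rt = rn V (((r :: rs).get i).2.get j) := by
          intro j
          exact (ihc _ (hi ▸ hRmem) _ (List.get_mem _ _)).1
        choose subs hsubs using hch
        refine ⟨.step i subs, ?_⟩
        rw [routeCost]
        have hs : ∑ j, routeCost V (subs j) = ∑ j, rn V (((r :: rs).get i).2.get j) :=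
          Finset.sum_congr rfl fun j _ => hsubs j
        rw [hs, hReq, ← hi, rnR_eq]
      · rintro x ⟨rt, rfl⟩
        cases rt with
        | step i subs =>
          have hmem : (r :: rs).get i ∈ r :: rs := List.get_mem _ _
          have hle : rn V (.node r rs) ≤ rnR V ((r :: rs).get i) := by
            rw [rn_node]
            rcases List.mem_cons.mp hmem with h | h
            · rw [h]; exact foldrMin_le
            · exact foldrMin_le_mem (List.mem_map_of_mem h)
          refine le_trans hle ?_
          rw [routeCost, rnR_eq]
          refine add_le_add_right (Finset.sum_le_sum fun j _ => ?_) _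
          exact (ihc _ hmem _ (List.get_mem _ _)).2 ⟨subs j, rfl⟩

/-- for every molecule node `u`, the reaction number `rn V u` is the
minimum (attained, and over a nonempty collection) of the total costs of the
synthesis routes of `u`. -/
theorem rn_eq_min_routeCost {M : Type} (V : M → ℝ) (u : Mol M) :
    IsLeast {x : ℝ | ∃ rt : Route u, routeCost V rt = x} (rn V u) :=
  rn_eq_min_routeCost_aux V (sizeOf u) u le_rfl
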